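/- In the conditional-calibration setup, the key inequality φ_j(1; S_j) ≤ 0 holds for every j: applying 1{X ≥ t} ≤ X/t inside the conditional expectation shows E[(m/α)·1{ẽ_j ≥ m/(α|R̂_j(ẽ)|)}/|R̂_j(ẽ)| − ẽ_j | S_j] ≤ 0. -/

import Mathlib

open MeasureTheory

/-- The e-BH rejection set at level `α` applied to e-values `e : Fin m → ℝ`. -/
noncomputable def eBHSet (m : ℕ) (α : ℝ) (e : Fin m → ℝ) : Finset (Fin m) :=
  let k := sSup {k : ℕ |
    k ≤ m ∧ k ≤ (Finset.univ.filter (fun j : Fin m => (m : ℝ) / (α * k) ≤ e j)).card}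
  if k = 0 then ∅ else Finset.univ.filter (fun j : Fin m => (m : ℝ) / (α * k) ≤ e j)

/-- `|R̂_j(e)| = |R(e) ∪ {j}|` where `R(e)` is the e-BH rejection set at level `α`. -/
noncomputable def RhatCard (m : ℕ) (α : ℝ) (e : Fin m → ℝ) (j : Fin m) : ℕ :=
  (insert j (eBHSet m α e)).card

/-- **The key inequality `φ_j(1; S_j) ≤ 0`.**  Applying `1{X ≥ t} ≤ X/t` inside the
conditional expectation shows
`𝔼[(m/α)·1{ẽ_j ≥ m/(α|R̂_j(ẽ)|)}/|R̂_j(ẽ)| − ẽ_j ∣ S_j] ≤ 0` (almost surely),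
for every `j`. -/
theorem phi_at_one_nonpos
    {Ω : Type*} [m0 : MeasurableSpace Ω] (μ : Measure Ω) [IsProbabilityMeasure μ]
    (m : ℕ) (hm : 0 < m) (α : ℝ) (hα : α ∈ Set.Ioo (0 : ℝ) 1)
    (e : Fin m → Ω → ℝ) (hmeas : ∀ j, Measurable (e j)) (hnonneg : ∀ j ω, 0 ≤ e j ω)
    (hint : ∀ j, Integrable (e j) μ)
    (𝔪 : Fin m → MeasurableSpace Ω) (h𝔪 : ∀ j, 𝔪 j ≤ m0)
    (φ : Fin m → ℝ → Ω → ℝ)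
    (hφ : ∀ j c, φ j c =ᵐ[μ]
      μ[ (fun ω =>
          (m : ℝ) / α *
            (if (m : ℝ) / (α * (RhatCard m α (fun i => e i ω) j : ℝ)) ≤ c * e j ω
              then 1 else 0) / (RhatCard m α (fun i => e i ω) j : ℝ)
          - e j ω) | 𝔪 j ]) :
    ∀ j, ∀ᵐ ω ∂μ, φ j 1 ω ≤ 0 := by
  intro j
  have hpt : (fun ω =>
      (m : ℝ) / α *
        (if (m : ℝ) / (α * (RhatCard m α (fun i => e i ω) j : ℝ)) ≤ 1 * e j ω
          then 1 else 0) / (RhatCard m α (fun i => e i ω) j : ℝ)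
      - e j ω) ≤ᵐ[μ] 0 := by
    filter_upwards with ω
    have hR : (1 : ℝ) ≤ (RhatCard m α (fun i => e i ω) j : ℝ) := by
      have : 1 ≤ RhatCard m α (fun i => e i ω) j :=
        Finset.card_pos.mpr ⟨j, Finset.mem_insert_self _ _⟩
      exact_mod_cast this
    have hRpos : (0 : ℝ) < (RhatCard m α (fun i => e i ω) j : ℝ) := lt_of_lt_of_le one_pos hR
    simp only [Pi.zero_apply]
    split_ifs with h
    · have : (m : ℝ) / α * 1 / (RhatCard m α (fun i => e i ω) j : ℝ) ≤ e j ω := by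
        rw [mul_one, div_div]
        calc (m : ℝ) / (α * (RhatCard m α (fun i => e i ω) j : ℝ)) ≤ 1 * e j ω := h
          _ = e j ω := one_mul _
      linarith
    · have := hnonneg j ω
      rw [mul_zero, zero_div]
      linarith
  have := (hφ j 1).trans_le (condExp_nonpos hpt)
  filter_upwards [this] with ω hω using hω
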